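/- arXiv:2405.16900 — 3 statements merged into one kernel-verified Lean document; each statement's English description precedes it below -/
import Mathlib

section
/- Let X ∈ St(n,r) and v ∈ T_X with ‖v‖_F ≤ 1, where T_X := {u ∈ ℝ^{n×r} : Xᵀu + uᵀX = 0} is the tangent space. Then the polar retraction satisfies ‖(X+v)(I_r + vᵀv)^{-1/2} − (X+v)‖_F ≤ ‖v‖_F². -/
open Matrix
open scoped BigOperators

attribute [local instance] Matrix.frobeniusNormedAddCommGroup Matrix.frobeniusNormedSpace

noncomputable section

/-- the Frobenius norm of a real matrix -/
def frob {n r : ℕ} (A : Matrix (Fin n) (Fin r) ℝ) : ℝ :=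
  Real.sqrt (∑ i, ∑ j, (A i j) ^ 2)

/-- the Stiefel manifold St(n,r) -/
def Stiefel (n r : ℕ) : Set (Matrix (Fin n) (Fin r) ℝ) := {X | Xᵀ * X = 1}

/-- the tangent space of St(n,r) at X -/
def Tang {n r : ℕ} (X : Matrix (Fin n) (Fin r) ℝ) : Set (Matrix (Fin n) (Fin r) ℝ) :=
  {u | Xᵀ * u + uᵀ * X = 0}

lemma psd_one_add_sq {n r : ℕ} (v : Matrix (Fin n) (Fin r) ℝ) :
    (1 + vᵀ * v).PosSemidef := by
  have h := (Matrix.PosDef.one (n := Fin r) (R := ℝ)).posSemidef.add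
    (Matrix.posSemidef_conjTranspose_mul_self v)
  simpa using h

/-- `Matrix.PosSemidef.sqrt` as defined in Mathlib of December 2024 (since removed) -/
def Matrix.PosSemidef.sqrt {m : Type*} [Fintype m] [DecidableEq m] {A : Matrix m m ℝ}
    (hA : A.PosSemidef) : Matrix m m ℝ :=
  hA.1.eigenvectorUnitary.1 * diagonal ((↑) ∘ Real.sqrt ∘ hA.1.eigenvalues) *
    (star hA.1.eigenvectorUnitary : Matrix m m ℝ)

/-- the polar retraction R_X(v) = (X+v)(I + vᵀv)^{-1/2} -/
def polarRetract {n r : ℕ} (X v : Matrix (Fin n) (Fin r) ℝ) : Matrix (Fin n) (Fin r) ℝ :=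
  (X + v) * ((psd_one_add_sq v).sqrt)⁻¹

/- ### auxiliary lemmas -/

lemma trace_transpose_mul_self {n r : ℕ} (M : Matrix (Fin n) (Fin r) ℝ) :
    (Mᵀ * M).trace = ∑ i, ∑ j, (M i j) ^ 2 := by
  rw [Matrix.trace, Finset.sum_comm]
  simp [Matrix.diag, Matrix.mul_apply, pow_two]

lemma frob_sq_eq_trace {n r : ℕ} (M : Matrix (Fin n) (Fin r) ℝ) :
    (frob M) ^ 2 = (Mᵀ * M).trace := by
  have hnn : (0:ℝ) ≤ ∑ i, ∑ j, (M i j) ^ 2 :=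
    Finset.sum_nonneg fun i _ => Finset.sum_nonneg fun j _ => sq_nonneg _
  rw [frob, Real.sq_sqrt hnn, trace_transpose_mul_self]

lemma frob_eq_sqrt_trace {n r : ℕ} (M : Matrix (Fin n) (Fin r) ℝ) :
    frob M = Real.sqrt ((Mᵀ * M).trace) := by
  rw [trace_transpose_mul_self, frob]

section conj

variable {r : ℕ} (U : Matrix (Fin r) (Fin r) ℝ)

/-- conjugation of a diagonal matrix by `U` -/
def conjD (c : Fin r → ℝ) : Matrix (Fin r) (Fin r) ℝ :=
  U * Matrix.diagonal c * Uᵀ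

lemma conjD_mul (hU' : Uᵀ * U = 1) (c d : Fin r → ℝ) :
    conjD U c * conjD U d = conjD U (c * d) := by
  have h : conjD U c * conjD U d = U * (diagonal c * (Uᵀ * U) * diagonal d) * Uᵀ := by
    simp only [conjD, Matrix.mul_assoc]
  have hdd : diagonal c * diagonal d = diagonal (c * d) := Matrix.diagonal_mul_diagonal c d
  rw [h, hU', Matrix.mul_one, hdd, conjD]

lemma conjD_one (hU : U * Uᵀ = 1) : conjD U (fun _ => 1) = 1 := by
  simp [conjD, hU]

lemma conjD_add (c d : Fin r → ℝ) :
    conjD U c + conjD U d = conjD U (c + d) := by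
  have h : diagonal c + diagonal d = diagonal (c + d) := Matrix.diagonal_add c d
  simp only [conjD, ← h, Matrix.mul_add, Matrix.add_mul]

lemma conjD_sub (c d : Fin r → ℝ) :
    conjD U c - conjD U d = conjD U (c - d) := by
  have h : diagonal c - diagonal d = diagonal (c - d) := Matrix.diagonal_sub c d
  simp only [conjD, ← h, Matrix.mul_sub, Matrix.sub_mul]

lemma conjD_trace (hU' : Uᵀ * U = 1) (c : Fin r → ℝ) :
    (conjD U c).trace = ∑ i, c i := by
  rw [conjD, Matrix.trace_mul_cycle, hU', Matrix.one_mul, Matrix.trace_diagonal]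

lemma conjD_transpose (c : Fin r → ℝ) : (conjD U c)ᵀ = conjD U c := by
  simp [conjD, Matrix.transpose_mul, Matrix.diagonal_transpose, Matrix.mul_assoc]

lemma conjD_posSemidef (c : Fin r → ℝ) (hc : ∀ i, 0 ≤ c i) :
    (conjD U c).PosSemidef := by
  have h := (Matrix.posSemidef_diagonal_iff.mpr hc).mul_mul_conjTranspose_same U
  simpa [conjD, Matrix.conjTranspose_eq_transpose_of_trivial] using h

end conj

/-- for `X ∈ St(n,r)` and a tangent vector `v` with `‖v‖_F ≤ 1`, the polar
retraction satisfies `‖R_X(v) − (X+v)‖_F ≤ ‖v‖_F²`. -/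
theorem polarRetract_second_order_bound {n r : ℕ}
    (X v : Matrix (Fin n) (Fin r) ℝ)
    (hX : X ∈ Stiefel n r) (hv : v ∈ Tang X) (hv1 : frob v ≤ 1) :
    frob (polarRetract X v - (X + v)) ≤ (frob v) ^ 2 := by
  classical
  have hA : (vᵀ * v).PosSemidef := by
    simpa [Matrix.conjTranspose_eq_transpose_of_trivial] using
      Matrix.posSemidef_conjTranspose_mul_self v
  set her := hA.1 with hher
  set U : Matrix (Fin r) (Fin r) ℝ := (her.eigenvectorUnitary : Matrix (Fin r) (Fin r) ℝ)
    with hUdef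
  have hU : U * Uᵀ = 1 := by
    have := (Matrix.mem_unitaryGroup_iff).mp her.eigenvectorUnitary.2
    simpa [Matrix.star_eq_conjTranspose,
      Matrix.conjTranspose_eq_transpose_of_trivial] using this
  have hU' : Uᵀ * U = 1 := by
    have := (Matrix.mem_unitaryGroup_iff').mp her.eigenvectorUnitary.2
    simpa [Matrix.star_eq_conjTranspose,
      Matrix.conjTranspose_eq_transpose_of_trivial] using this
  set lam : Fin r → ℝ := her.eigenvalues with hlam
  have hlam_nonneg : ∀ i, 0 ≤ lam i := fun i => hA.eigenvalues_nonneg i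
  have hspec : vᵀ * v = conjD U lam := by
    have := her.spectral_theorem
    simpa [conjD, Matrix.star_eq_conjTranspose,
      Matrix.conjTranspose_eq_transpose_of_trivial, Function.comp] using this
  set mu : Fin r → ℝ := fun i => Real.sqrt (1 + lam i) with hmu
  have hmu_one : ∀ i, 1 ≤ mu i := fun i =>
    Real.one_le_sqrt.mpr (by linarith [hlam_nonneg i])
  have hmu_pos : ∀ i, 0 < mu i := fun i => lt_of_lt_of_le one_pos (hmu_one i)
  have hmu_sq : ∀ i, mu i * mu i = 1 + lam i := fun i =>
    Real.mul_self_sqrt (by linarith [hlam_nonneg i])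
  -- 1 + vᵀv as a conjugated diagonal
  have hBconj : (1 : Matrix (Fin r) (Fin r) ℝ) + vᵀ * v = conjD U (fun i => 1 + lam i) := by
    have h := conjD_add U (fun _ => 1) lam
    rw [conjD_one U hU] at h
    rw [hspec, h]
    rfl
  -- the square root is conjD U mu
  have hS0psd : (conjD U mu).PosSemidef :=
    conjD_posSemidef U mu (fun i => (hmu_pos i).le)
  have hS0sq : conjD U mu ^ 2 = 1 + vᵀ * v := by
    rw [pow_two, conjD_mul U hU', hBconj, show mu * mu = fun i => 1 + lam i from
      funext hmu_sq]
  have hsqrt : conjD U mu = (psd_one_add_sq v).sqrt :=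
    by
    have hsa : IsSelfAdjoint (vᵀ * v) := her
    have e1 : (psd_one_add_sq v).sqrt = cfc Real.sqrt (1 + vᵀ * v) := by
      rw [(psd_one_add_sq v).1.cfc_eq, Matrix.IsHermitian.cfc, Unitary.conjStarAlgAut_apply]; rfl
    have e2 : conjD U mu = cfc (fun x => Real.sqrt (1 + x)) (vᵀ * v) := by
      rw [her.cfc_eq, Matrix.IsHermitian.cfc, Unitary.conjStarAlgAut_apply]
      simp [conjD, hmu, hlam, hUdef, Matrix.star_eq_conjTranspose,
        Matrix.conjTranspose_eq_transpose_of_trivial, Function.comp_def]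
    have e3 : (1 : Matrix (Fin r) (Fin r) ℝ) + vᵀ * v = cfc (fun x : ℝ => 1 + x) (vᵀ * v) := by
      rw [cfc_const_add (1 : ℝ) (fun x : ℝ => x) (vᵀ * v), cfc_id' ℝ (vᵀ * v), map_one]
    rw [e2, e1, e3, ← cfc_comp (fun x : ℝ => Real.sqrt x) (fun x : ℝ => 1 + x) (vᵀ * v)]
    rfl
  -- the inverse
  have hinv : ((psd_one_add_sq v).sqrt)⁻¹ = conjD U (fun i => (mu i)⁻¹) := by
    rw [← hsqrt]
    apply Matrix.inv_eq_right_inv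
    rw [conjD_mul U hU']
    rw [show (mu * fun i => (mu i)⁻¹) = fun _ => 1 by
      funext i; exact mul_inv_cancel₀ (hmu_pos i).ne']
    exact conjD_one U hU
  -- the Gram matrix of X + v
  have hGram : (X + v)ᵀ * (X + v) = 1 + vᵀ * v := by
    have h1 : Xᵀ * X = 1 := hX
    have h2 : Xᵀ * v + vᵀ * X = 0 := hv
    have : (X + v)ᵀ * (X + v) = Xᵀ * X + (Xᵀ * v + vᵀ * X) + vᵀ * v := by
      rw [Matrix.transpose_add, Matrix.add_mul, Matrix.mul_add, Matrix.mul_add]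
      abel
    rw [this, h1, h2, add_zero]
  -- the difference
  set c : Fin r → ℝ := fun i => (mu i)⁻¹ - 1 with hc
  set D := polarRetract X v - (X + v) with hD
  have hDeq : D = (X + v) * conjD U c := by
    have hsub := conjD_sub U (fun i => (mu i)⁻¹) (fun _ => 1)
    rw [conjD_one U hU] at hsub
    have hcs : ((fun i => (mu i)⁻¹) - fun _ => (1:ℝ)) = c := by funext i; simp [hc]
    rw [hcs] at hsub
    rw [hD, polarRetract, hinv, ← hsub, Matrix.mul_sub, Matrix.mul_one]
  have hDtD : Dᵀ * D = conjD U (fun i => (1 - mu i) ^ 2) := by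
    have step : Dᵀ * D = conjD U c * ((X + v)ᵀ * (X + v)) * conjD U c := by
      rw [hDeq, Matrix.transpose_mul, conjD_transpose]
      simp only [Matrix.mul_assoc]
    rw [step, hGram, hBconj, conjD_mul U hU', conjD_mul U hU']
    have hfun : (c * fun i => 1 + lam i) * c = fun i => (1 - mu i) ^ 2 := by
      funext i
      have h0 : mu i ≠ 0 := (hmu_pos i).ne'
      show c i * (1 + lam i) * c i = (1 - mu i) ^ 2
      rw [hc]
      field_simp
      nlinarith [hmu_sq i]
    rw [hfun]
  -- traces
  have htrD : (Dᵀ * D).trace = ∑ i, (1 - mu i) ^ 2 := by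
    rw [hDtD, conjD_trace U hU']
  have htrv : (vᵀ * v).trace = ∑ i, lam i := by rw [hspec, conjD_trace U hU']
  -- the scalar inequality
  have hmu_le : ∀ i, mu i - 1 ≤ lam i := by
    intro i
    have h1 := hmu_one i
    have h2 := hmu_sq i
    nlinarith
  have hsum : ∑ i, (1 - mu i) ^ 2 ≤ (∑ i, lam i) ^ 2 := by
    calc ∑ i, (1 - mu i) ^ 2 ≤ ∑ i, (lam i) ^ 2 := by
          apply Finset.sum_le_sum
          intro i _
          have h1 := hmu_one i
          have h2 := hmu_le i
          nlinarith
      _ ≤ (∑ i, lam i) ^ 2 :=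
          Finset.sum_sq_le_sq_sum_of_nonneg (fun i _ => hlam_nonneg i)
  have hlamsum_nonneg : 0 ≤ ∑ i, lam i := Finset.sum_nonneg fun i _ => hlam_nonneg i
  have hfv : (frob v) ^ 2 = ∑ i, lam i := by rw [frob_sq_eq_trace, htrv]
  rw [frob_eq_sqrt_trace, htrD, hfv]
  calc Real.sqrt (∑ i, (1 - mu i) ^ 2)
      ≤ Real.sqrt ((∑ i, lam i) ^ 2) := Real.sqrt_le_sqrt hsum
    _ = ∑ i, lam i := Real.sqrt_sq hlamsum_nonneg

end
end

section
/- Let φ : ℝ^{n×r} → ℝ be differentiable with L-Lipschitz continuous gradient (‖∇φ(X) − ∇φ(Y)‖_F ≤ L‖X−Y‖_F for all X,Y ∈ ℝ^{n×r}), and set L_n := max_{X ∈ St(n,r)} ‖∇φ(X)‖₂ (spectral norm) and L_g := L + L_n. Then for all X, Y ∈ St(n,r), |φ(Y) − φ(X) − ⟨grad φ(X), Y − X⟩| ≤ (L_g/2)‖Y − X‖_F². -/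
open Matrix
open scoped BigOperators

attribute [local instance] Matrix.frobeniusNormedAddCommGroup Matrix.frobeniusNormedSpace

noncomputable section

/-- the trace inner product ⟨A,B⟩ = tr(AᵀB) -/
def innerF {n r : ℕ} (A B : Matrix (Fin n) (Fin r) ℝ) : ℝ := (Aᵀ * B).trace

/-- orthogonal projection onto the tangent space at X -/
def projT {n r : ℕ} (X Y : Matrix (Fin n) (Fin r) ℝ) : Matrix (Fin n) (Fin r) ℝ :=
  Y - (1 / 2 : ℝ) • (X * (Xᵀ * Y + Yᵀ * X))

/-- the spectral norm (operator 2-norm) of a matrix -/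
def spec {n r : ℕ} (A : Matrix (Fin n) (Fin r) ℝ) : ℝ :=
  ‖LinearMap.toContinuousLinearMap (Matrix.toEuclideanLin A)‖

/-- the Euclidean gradient of φ : ℝ^{n×r} → ℝ (w.r.t. the trace inner product) -/
def egrad {n r : ℕ} (φ : Matrix (Fin n) (Fin r) ℝ → ℝ) (X : Matrix (Fin n) (Fin r) ℝ) :
    Matrix (Fin n) (Fin r) ℝ :=
  fun i j => fderiv ℝ φ X (Matrix.single i j 1)

/-- the Riemannian gradient on the Stiefel manifold: grad φ(X) = P_{T_X}(∇φ(X)) -/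
def rgrad {n r : ℕ} (φ : Matrix (Fin n) (Fin r) ℝ → ℝ) (X : Matrix (Fin n) (Fin r) ℝ) :
    Matrix (Fin n) (Fin r) ℝ :=
  projT X (egrad φ X)

section Aux
variable {n r : ℕ}

lemma frob_nonneg (A : Matrix (Fin n) (Fin r) ℝ) : 0 ≤ frob A := Real.sqrt_nonneg _

lemma frob_sq (A : Matrix (Fin n) (Fin r) ℝ) : frob A ^ 2 = ∑ i, ∑ j, (A i j) ^ 2 :=
  Real.sq_sqrt (by positivity)

lemma frob_smul (t : ℝ) (A : Matrix (Fin n) (Fin r) ℝ) : frob (t • A) = |t| * frob A := by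
  unfold frob
  rw [← Real.sqrt_sq_eq_abs, ← Real.sqrt_mul (sq_nonneg t)]
  congr 1
  simp [Finset.mul_sum, mul_pow]

lemma innerF_eq_sum (A B : Matrix (Fin n) (Fin r) ℝ) :
    innerF A B = ∑ i, ∑ j, A i j * B i j := by
  simp only [innerF, Matrix.trace, Matrix.diag, Matrix.mul_apply, Matrix.transpose_apply]
  exact Finset.sum_comm

lemma abs_sum_mul_le {ι : Type*} [Fintype ι] (f g : ι → ℝ) :
    |∑ i, f i * g i| ≤ Real.sqrt (∑ i, f i ^ 2) * Real.sqrt (∑ i, g i ^ 2) := by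
  rw [← Real.sqrt_mul (by positivity), ← Real.sqrt_sq_eq_abs]
  exact Real.sqrt_le_sqrt (Finset.sum_mul_sq_le_sq_mul_sq _ _ _)

lemma abs_innerF_le (A B : Matrix (Fin n) (Fin r) ℝ) :
    |innerF A B| ≤ frob A * frob B := by
  rw [innerF_eq_sum]
  have h1 : ∑ i, ∑ j, A i j * B i j = ∑ p : Fin n × Fin r, A p.1 p.2 * B p.1 p.2 :=
    by rw [← Finset.sum_product']; rfl
  have h2 : ∑ i, ∑ j, (A i j) ^ 2 = ∑ p : Fin n × Fin r, (A p.1 p.2) ^ 2 :=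
    by rw [← Finset.sum_product']; rfl
  have h3 : ∑ i, ∑ j, (B i j) ^ 2 = ∑ p : Fin n × Fin r, (B p.1 p.2) ^ 2 :=
    by rw [← Finset.sum_product']; rfl
  rw [h1]
  unfold frob
  rw [h2, h3]
  exact abs_sum_mul_le _ _

lemma innerF_sub_left (A B C : Matrix (Fin n) (Fin r) ℝ) :
    innerF (A - B) C = innerF A C - innerF B C := by
  simp [innerF, Matrix.transpose_sub, Matrix.sub_mul]

end Aux
section Aux2
variable {n r : ℕ}

lemma fderiv_eq_innerF (φ : Matrix (Fin n) (Fin r) ℝ → ℝ) (Z V : Matrix (Fin n) (Fin r) ℝ) :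
    fderiv ℝ φ Z V = innerF (egrad φ Z) V := by
  have hV : V = ∑ i, ∑ j, V i j • Matrix.single i j (1 : ℝ) := by
    conv_lhs => rw [Matrix.matrix_eq_sum_single V]
    simp [Matrix.smul_single]
  conv_lhs => rw [hV]
  rw [map_sum]
  rw [innerF_eq_sum]
  refine Finset.sum_congr rfl fun i _ => ?_
  rw [map_sum]
  refine Finset.sum_congr rfl fun j _ => ?_
  rw [_root_.map_smul]
  simp [egrad, mul_comm]

lemma spec_nonneg (A : Matrix (Fin n) (Fin r) ℝ) : 0 ≤ spec A := norm_nonneg _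

lemma mulVec_le_spec (A : Matrix (Fin n) (Fin r) ℝ) (u : Fin r → ℝ) :
    Real.sqrt (∑ i, (A *ᵥ u) i ^ 2) ≤ spec A * Real.sqrt (∑ j, (u j) ^ 2) := by
  have h := (LinearMap.toContinuousLinearMap (Matrix.toEuclideanLin A)).le_opNorm
    ((WithLp.equiv 2 (Fin r → ℝ)).symm u)
  simpa [EuclideanSpace.norm_eq, Real.norm_eq_abs, sq_abs, spec,
    Matrix.toEuclideanLin_apply_piLp_toLp] using h

end Aux2
section Aux3
variable {n r : ℕ}

lemma stiefel_mulVec_sq {X : Matrix (Fin n) (Fin r) ℝ} (hX : X ∈ Stiefel n r)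
    (u : Fin r → ℝ) : ∑ i, (X *ᵥ u) i ^ 2 = ∑ j, u j ^ 2 := by
  have h : (X *ᵥ u) ⬝ᵥ (X *ᵥ u) = u ⬝ᵥ u := by
    rw [Matrix.dotProduct_mulVec, Matrix.vecMul_mulVec, hX, Matrix.vecMul_one]
  simpa [dotProduct, sq] using h

/-- per-row bound: |u ⬝ (XᵀG) u| ≤ spec G * ∑ u². -/
lemma row_bound {X : Matrix (Fin n) (Fin r) ℝ} (hX : X ∈ Stiefel n r)
    (G : Matrix (Fin n) (Fin r) ℝ) (u : Fin r → ℝ) :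
    |u ⬝ᵥ ((Xᵀ * G) *ᵥ u)| ≤ spec G * ∑ j, u j ^ 2 := by
  have h1 : u ⬝ᵥ ((Xᵀ * G) *ᵥ u) = (X *ᵥ u) ⬝ᵥ (G *ᵥ u) := by
    rw [← Matrix.mulVec_mulVec, Matrix.dotProduct_mulVec, Matrix.vecMul_transpose]
  rw [h1]
  have h2 : |(X *ᵥ u) ⬝ᵥ (G *ᵥ u)| ≤
      Real.sqrt (∑ i, (X *ᵥ u) i ^ 2) * Real.sqrt (∑ i, (G *ᵥ u) i ^ 2) :=
    abs_sum_mul_le _ _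
  rw [stiefel_mulVec_sq hX] at h2
  calc |(X *ᵥ u) ⬝ᵥ (G *ᵥ u)| ≤ Real.sqrt (∑ j, u j ^ 2) * Real.sqrt (∑ i, (G *ᵥ u) i ^ 2) := h2
    _ ≤ Real.sqrt (∑ j, u j ^ 2) * (spec G * Real.sqrt (∑ j, u j ^ 2)) := by
        exact mul_le_mul_of_nonneg_left (mulVec_le_spec G u) (Real.sqrt_nonneg _)
    _ = spec G * (Real.sqrt (∑ j, u j ^ 2) * Real.sqrt (∑ j, u j ^ 2)) := by ring
    _ = spec G * ∑ j, u j ^ 2 := by rw [Real.mul_self_sqrt (by positivity)]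

end Aux3
lemma trace_mul_transpose_mul {n r : ℕ} (A : Matrix (Fin r) (Fin r) ℝ)
    (E : Matrix (Fin n) (Fin r) ℝ) :
    Matrix.trace (A * (Eᵀ * E)) = ∑ i, (fun j => E i j) ⬝ᵥ (A *ᵥ fun j => E i j) := by
  simp only [Matrix.trace, Matrix.diag, Matrix.mul_apply, dotProduct, Matrix.mulVec,
    Matrix.transpose_apply, Finset.mul_sum, Finset.sum_mul]
  calc (∑ k, ∑ j, ∑ i, A k j * (E i j * E i k))
      = ∑ k, ∑ i, ∑ j, A k j * (E i j * E i k) :=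
        Finset.sum_congr rfl fun k _ => Finset.sum_comm
    _ = ∑ i, ∑ k, ∑ j, A k j * (E i j * E i k) := Finset.sum_comm
    _ = ∑ i : Fin n, ∑ j, ∑ k, E i j * (A j k * E i k) := by
        refine Finset.sum_congr rfl fun i _ => Finset.sum_congr rfl fun j _ =>
          Finset.sum_congr rfl fun k _ => ?_
        ring
section Aux4
variable {n r : ℕ}

lemma innerF_smul_left (c : ℝ) (A B : Matrix (Fin n) (Fin r) ℝ) :
    innerF (c • A) B = c * innerF A B := by
  simp [innerF, Matrix.transpose_smul, Matrix.smul_mul, Matrix.trace_smul]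

lemma innerF_zero_right (A : Matrix (Fin n) (Fin r) ℝ) : innerF A 0 = 0 := by
  simp [innerF]

lemma frob_eq_zero {A : Matrix (Fin n) (Fin r) ℝ} (h : frob A = 0) : A = 0 := by
  have h2 : ∑ i, ∑ j, (A i j) ^ 2 = 0 := by
    have := frob_sq A
    rw [h] at this; linarith [this]
  ext i j
  have hi := (Finset.sum_eq_zero_iff_of_nonneg (fun i _ => by positivity)).mp h2 i (by simp)
  have hj := (Finset.sum_eq_zero_iff_of_nonneg (fun j _ => by positivity)).mp hi j (by simp)
  simpa using pow_eq_zero_iff (n := 2) (by norm_num) |>.mp hj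

/-- |tr((GᵀX + XᵀG)(EᵀE))| ≤ 2 spec G ‖E‖_F². -/
lemma trace_bound {X : Matrix (Fin n) (Fin r) ℝ} (hX : X ∈ Stiefel n r)
    (G E : Matrix (Fin n) (Fin r) ℝ) :
    |Matrix.trace ((Gᵀ * X + Xᵀ * G) * (Eᵀ * E))| ≤ 2 * spec G * frob E ^ 2 := by
  have hsym : Matrix.trace (Gᵀ * X * (Eᵀ * E)) = Matrix.trace (Xᵀ * G * (Eᵀ * E)) := by
    calc Matrix.trace (Gᵀ * X * (Eᵀ * E)) = Matrix.trace ((Gᵀ * X * (Eᵀ * E))ᵀ) :=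
          (Matrix.trace_transpose _).symm
      _ = Matrix.trace ((Eᵀ * E) * (Xᵀ * G)) := by
          rw [Matrix.transpose_mul, Matrix.transpose_mul, Matrix.transpose_mul]
          simp [Matrix.mul_assoc]
      _ = Matrix.trace (Xᵀ * G * (Eᵀ * E)) := Matrix.trace_mul_comm _ _
  have hkey : |Matrix.trace (Xᵀ * G * (Eᵀ * E))| ≤ spec G * frob E ^ 2 := by
    rw [trace_mul_transpose_mul]
    calc |∑ i, (fun j => E i j) ⬝ᵥ ((Xᵀ * G) *ᵥ fun j => E i j)|
        ≤ ∑ i, |(fun j => E i j) ⬝ᵥ ((Xᵀ * G) *ᵥ fun j => E i j)| :=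
          Finset.abs_sum_le_sum_abs _ _
      _ ≤ ∑ i, spec G * ∑ j, (E i j) ^ 2 :=
          Finset.sum_le_sum fun i _ => row_bound hX G _
      _ = spec G * ∑ i, ∑ j, (E i j) ^ 2 := by rw [← Finset.mul_sum]
      _ = spec G * frob E ^ 2 := by rw [frob_sq]
  have hadd : Matrix.trace ((Gᵀ * X + Xᵀ * G) * (Eᵀ * E)) =
      Matrix.trace (Gᵀ * X * (Eᵀ * E)) + Matrix.trace (Xᵀ * G * (Eᵀ * E)) := by
    rw [Matrix.add_mul, Matrix.trace_add]
  rw [hadd, hsym]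
  calc |Matrix.trace (Xᵀ * G * (Eᵀ * E)) + Matrix.trace (Xᵀ * G * (Eᵀ * E))|
      = 2 * |Matrix.trace (Xᵀ * G * (Eᵀ * E))| := by rw [← two_mul, abs_mul]; simp
    _ ≤ 2 * (spec G * frob E ^ 2) := by linarith [hkey]
    _ = 2 * spec G * frob E ^ 2 := by ring

/-- the tangent-projection correction identity -/
lemma innerF_projT {X Y : Matrix (Fin n) (Fin r) ℝ} (hX : X ∈ Stiefel n r)
    (hY : Y ∈ Stiefel n r) (G : Matrix (Fin n) (Fin r) ℝ) :
    innerF (projT X G) (Y - X) = innerF G (Y - X) +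
      (1 / 4) * Matrix.trace ((Gᵀ * X + Xᵀ * G) * ((Y - X)ᵀ * (Y - X))) := by
  set E := Y - X with hE
  set S := Gᵀ * X + Xᵀ * G with hS
  have hSsymm : Sᵀ = S := by
    rw [hS, Matrix.transpose_add, Matrix.transpose_mul, Matrix.transpose_mul]
    simp [add_comm]
  have hXE : Xᵀ * E + Eᵀ * X = -(Eᵀ * E) := by
    rw [hE]
    have hX' : Xᵀ * X = 1 := hX
    have hY' : Yᵀ * Y = 1 := hY
    simp only [Matrix.transpose_sub, Matrix.sub_mul, Matrix.mul_sub, hX', hY']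
    abel
  have h1 : Matrix.trace (S * (Xᵀ * E)) = Matrix.trace (S * (Eᵀ * X)) := by
    calc Matrix.trace (S * (Xᵀ * E)) = Matrix.trace ((S * (Xᵀ * E))ᵀ) :=
          (Matrix.trace_transpose _).symm
      _ = Matrix.trace ((Eᵀ * X) * Sᵀ) := by
          rw [Matrix.transpose_mul, Matrix.transpose_mul]; simp [Matrix.mul_assoc]
      _ = Matrix.trace ((Eᵀ * X) * S) := by rw [hSsymm]
      _ = Matrix.trace (S * (Eᵀ * X)) := Matrix.trace_mul_comm _ _
  have h2 : Matrix.trace (S * (Xᵀ * E)) = -(1 / 2) * Matrix.trace (S * (Eᵀ * E)) := by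
    have : Matrix.trace (S * (Xᵀ * E)) + Matrix.trace (S * (Eᵀ * X)) =
        Matrix.trace (S * (Xᵀ * E + Eᵀ * X)) := by rw [Matrix.mul_add, Matrix.trace_add]
    rw [hXE] at this
    have hneg : Matrix.trace (S * -(Eᵀ * E)) = -Matrix.trace (S * (Eᵀ * E)) := by
      rw [Matrix.mul_neg, Matrix.trace_neg]
    rw [hneg, ← h1] at this
    linarith
  have htr : innerF (X * (Xᵀ * G + Gᵀ * X)) E = Matrix.trace (S * (Xᵀ * E)) := by
    unfold innerF
    rw [Matrix.transpose_mul, Matrix.transpose_add, Matrix.transpose_mul, Matrix.transpose_mul,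
      Matrix.transpose_transpose, Matrix.transpose_transpose, Matrix.mul_assoc, hS]
  have hproj : innerF (projT X G) E = innerF G E - (1 / 2) * Matrix.trace (S * (Xᵀ * E)) := by
    unfold projT
    rw [innerF_sub_left, innerF_smul_left, htr]
  rw [hproj, h2]
  ring

end Aux4
/-- Taylor-type quadratic bound from Lipschitz gradient. -/
lemma taylor_bound {n r : ℕ} (φ : Matrix (Fin n) (Fin r) ℝ → ℝ) (L : ℝ) (hL : 0 ≤ L)
    (hdiff : Differentiable ℝ φ)
    (hLip : ∀ X Y : Matrix (Fin n) (Fin r) ℝ, frob (egrad φ X - egrad φ Y) ≤ L * frob (X - Y))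
    (X E : Matrix (Fin n) (Fin r) ℝ) :
    |φ (X + E) - φ X - innerF (egrad φ X) E| ≤ L / 2 * frob E ^ 2 := by
  set c := frob E with hc
  have hc0 : 0 ≤ c := frob_nonneg E
  set g' : ℝ → ℝ := fun t => fderiv ℝ φ (X + t • E) E with hg'
  have hline : ∀ t : ℝ, HasDerivAt (fun s : ℝ => X + s • E) E t := fun t => by
    have h := ((hasDerivAt_id t).smul_const E).const_add X; rwa [one_smul] at h
  have hg : ∀ t : ℝ, HasDerivAt (fun s => φ (X + s • E)) (g' t) t := fun t =>
    (hdiff (X + t • E)).hasFDerivAt.comp_hasDerivAt t (hline t)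
  have key : ∀ s t : ℝ, |g' t - g' s| ≤ L * |t - s| * c ^ 2 := by
    intro s t
    have hdiffZ : (X + t • E) - (X + s • E) = (t - s) • E := by
      rw [sub_smul]; abel
    have h1 : g' t - g' s = innerF (egrad φ (X + t • E) - egrad φ (X + s • E)) E := by
      rw [hg', innerF_sub_left]
      simp only [fderiv_eq_innerF]
    rw [h1]
    calc |innerF (egrad φ (X + t • E) - egrad φ (X + s • E)) E|
        ≤ frob (egrad φ (X + t • E) - egrad φ (X + s • E)) * frob E := abs_innerF_le _ _
      _ ≤ (L * frob ((X + t • E) - (X + s • E))) * frob E := by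
          exact mul_le_mul_of_nonneg_right (hLip _ _) (frob_nonneg E)
      _ = L * |t - s| * c ^ 2 := by rw [hdiffZ, frob_smul, ← hc]; ring
  have hcont : Continuous g' := by
    have : LipschitzWith (Real.toNNReal (L * c ^ 2)) g' := by
      apply LipschitzWith.of_dist_le_mul
      intro t s
      rw [Real.dist_eq, Real.dist_eq, Real.coe_toNNReal _ (by positivity)]
      calc |g' t - g' s| ≤ L * |t - s| * c ^ 2 := key s t
        _ = L * c ^ 2 * |t - s| := by ring
    exact this.continuous
  have hint : IntervalIntegrable g' MeasureTheory.volume 0 1 :=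
    hcont.intervalIntegrable 0 1
  have heq : φ (X + E) - φ X = ∫ t in (0:ℝ)..1, g' t := by
    have h := intervalIntegral.integral_eq_sub_of_hasDerivAt
      (f := fun s => φ (X + s • E)) (f' := g') (a := 0) (b := 1)
      (fun t _ => hg t) hint
    rw [h]
    norm_num
  have hg'0 : innerF (egrad φ X) E = g' 0 := by
    rw [hg']
    simp only [zero_smul, add_zero]
    rw [fderiv_eq_innerF]
  have hsub : φ (X + E) - φ X - innerF (egrad φ X) E = ∫ t in (0:ℝ)..1, (g' t - g' 0) := by
    rw [intervalIntegral.integral_sub hint (intervalIntegrable_const), heq, hg'0]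
    simp
  rw [hsub]
  have hb : ∀ᵐ t ∂MeasureTheory.volume.restrict (Set.uIoc (0:ℝ) 1),
      ‖g' t - g' 0‖ ≤ L * c ^ 2 * t := by
    refine (MeasureTheory.ae_restrict_iff' measurableSet_uIoc).mpr (.of_forall fun t ht => ?_)
    rw [Set.uIoc_of_le zero_le_one] at ht
    have ht0 : 0 < t := ht.1
    calc ‖g' t - g' 0‖ = |g' t - g' 0| := rfl
      _ ≤ L * |t - 0| * c ^ 2 := key 0 t
      _ = L * c ^ 2 * t := by rw [sub_zero, abs_of_pos ht0]; ring
  have hbint : IntervalIntegrable (fun t => L * c ^ 2 * t) MeasureTheory.volume 0 1 :=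
    (continuous_const.mul continuous_id).intervalIntegrable 0 1
  calc |∫ t in (0:ℝ)..1, (g' t - g' 0)| ≤ |∫ t in (0:ℝ)..1, L * c ^ 2 * t| :=
        intervalIntegral.norm_integral_le_abs_of_norm_le hb hbint
    _ = L / 2 * c ^ 2 := by
        rw [intervalIntegral.integral_const_mul, integral_id]
        rw [abs_of_nonneg (by positivity)]
        ring
/-- Lipschitz-type inequality on the Stiefel manifold. If `φ` is differentiable
with `L`-Lipschitz Euclidean gradient, `L_n = max_{X ∈ St(n,r)} ‖∇φ(X)‖₂` and
`L_g = L + L_n`, then for all `X, Y ∈ St(n,r)`,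
`|φ(Y) − φ(X) − ⟨grad φ(X), Y − X⟩| ≤ (L_g/2)‖Y − X‖_F²`. -/
theorem riemannian_lipschitz_type_inequality {n r : ℕ}
    (φ : Matrix (Fin n) (Fin r) ℝ → ℝ) (L Ln Lg : ℝ)
    (hdiff : Differentiable ℝ φ)
    (hLip : ∀ X Y : Matrix (Fin n) (Fin r) ℝ, frob (egrad φ X - egrad φ Y) ≤ L * frob (X - Y))
    (hLn : IsGreatest ((fun X => spec (egrad φ X)) '' Stiefel n r) Ln)
    (hLg : Lg = L + Ln)
    (X Y : Matrix (Fin n) (Fin r) ℝ) (hX : X ∈ Stiefel n r) (hY : Y ∈ Stiefel n r) :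
    |φ Y - (φ X + innerF (rgrad φ X) (Y - X))| ≤ Lg / 2 * frob (Y - X) ^ 2 := by
  by_cases hE0 : frob (Y - X) = 0
  · have hYX : Y = X := by
      have := frob_eq_zero hE0
      rwa [sub_eq_zero] at this
    subst hYX
    simp only [sub_self, innerF_zero_right, add_zero, abs_zero]
    simp [frob]
  · set E := Y - X with hE
    set G := egrad φ X with hG
    have hEpos : 0 < frob E := lt_of_le_of_ne (frob_nonneg E) (Ne.symm hE0)
    have hL : 0 ≤ L := by
      have h1 := hLip Y X
      have h2 := frob_nonneg (egrad φ Y - egrad φ X)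
      nlinarith
    have hspec : spec G ≤ Ln := hLn.2 ⟨X, hX, rfl⟩
    have hLn0 : 0 ≤ Ln := le_trans (spec_nonneg G) hspec
    have htay := taylor_bound φ L hL hdiff hLip X E
    have hXE : X + E = Y := by rw [hE]; abel
    rw [hXE] at htay
    have hid : innerF (rgrad φ X) E = innerF G E +
        (1 / 4) * Matrix.trace ((Gᵀ * X + Xᵀ * G) * (Eᵀ * E)) := innerF_projT hX hY G
    have htr := trace_bound hX G E
    set T := Matrix.trace ((Gᵀ * X + Xᵀ * G) * (Eᵀ * E)) with hT
    have habs : |φ Y - (φ X + innerF (rgrad φ X) E)| ≤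
        |φ Y - φ X - innerF G E| + (1 / 4) * |T| := by
      rw [hid]
      have : φ Y - (φ X + (innerF G E + 1 / 4 * T)) =
          (φ Y - φ X - innerF G E) - (1 / 4) * T := by ring
      rw [this]
      calc |(φ Y - φ X - innerF G E) - (1 / 4) * T| ≤
            |φ Y - φ X - innerF G E| + |(1 / 4) * T| := abs_sub _ _
        _ = |φ Y - φ X - innerF G E| + (1 / 4) * |T| := by
            rw [abs_mul]; norm_num
    have hsq : 0 ≤ frob E ^ 2 := sq_nonneg _
    calc |φ Y - (φ X + innerF (rgrad φ X) E)| ≤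
          |φ Y - φ X - innerF G E| + (1 / 4) * |T| := habs
      _ ≤ L / 2 * frob E ^ 2 + (1 / 4) * (2 * spec G * frob E ^ 2) := by
          have : (1 / 4 : ℝ) * |T| ≤ (1 / 4) * (2 * spec G * frob E ^ 2) := by linarith
          linarith
      _ ≤ L / 2 * frob E ^ 2 + (1 / 4) * (2 * Ln * frob E ^ 2) := by nlinarith
      _ = Lg / 2 * frob E ^ 2 := by rw [hLg]; ring

end
end

section
/- Let X_1, …, X_N ∈ St(n,r) and let X̄ := (1/N)Σ_{i=1}^N X_i have full column rank r. Then the polar factor X̂ := X̄(X̄ᵀX̄)^{-1/2} belongs to St(n,r) and minimizes Σ_{i=1}^N ‖Y − X_i‖_F² over Y ∈ St(n,r); that is, for every Y ∈ St(n,r), Σ_{i=1}^N ‖X̂ − X_i‖_F² ≤ Σ_{i=1}^N ‖Y − X_i‖_F². In other words, the induced arithmetic mean equals the orthogonal projection of the Euclidean average onto the Stiefel manifold. -/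
open Matrix
open scoped BigOperators

noncomputable section

lemma psd_AtA {n r : ℕ} (A : Matrix (Fin n) (Fin r) ℝ) : (Aᵀ * A).PosSemidef := by
  simpa using Matrix.posSemidef_conjTranspose_mul_self A

/-- the old Mathlib `Matrix.PosSemidef.sqrt` (removed upstream), spelled out -/
def psdSqrt {r : ℕ} {M : Matrix (Fin r) (Fin r) ℝ} (hA : M.PosSemidef) : Matrix (Fin r) (Fin r) ℝ :=
  (hA.1.eigenvectorUnitary : Matrix (Fin r) (Fin r) ℝ) *
    diagonal ((↑) ∘ (Real.sqrt ·) ∘ hA.1.eigenvalues) *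
    (star hA.1.eigenvectorUnitary : Matrix (Fin r) (Fin r) ℝ)

/-- the polar factor A(AᵀA)^{-1/2} -/
def polarFactor {n r : ℕ} (A : Matrix (Fin n) (Fin r) ℝ) : Matrix (Fin n) (Fin r) ℝ :=
  A * (psdSqrt (psd_AtA A))⁻¹

lemma psdSqrt_mul_self {r : ℕ} {M : Matrix (Fin r) (Fin r) ℝ} (hA : M.PosSemidef) :
    psdSqrt hA * psdSqrt hA = M := by
  set U := hA.1.eigenvectorUnitary
  have hU : (star U : Matrix (Fin r) (Fin r) ℝ) * (U : Matrix (Fin r) (Fin r) ℝ) = 1 :=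
    Unitary.coe_star_mul_self U
  have hM := hA.1.spectral_theorem
  rw [Unitary.conjStarAlgAut_apply] at hM
  have hD : diagonal ((fun x : ℝ => x) ∘ (Real.sqrt ·) ∘ hA.1.eigenvalues) *
      diagonal ((fun x : ℝ => x) ∘ (Real.sqrt ·) ∘ hA.1.eigenvalues) =
      diagonal (RCLike.ofReal ∘ hA.1.eigenvalues) := by
    rw [diagonal_mul_diagonal]
    congr 1; funext i
    simp [Real.mul_self_sqrt (hA.eigenvalues_nonneg i)]
  unfold psdSqrt
  conv_rhs => rw [hM]
  calc _ = (U : Matrix (Fin r) (Fin r) ℝ) * (diagonal ((fun x : ℝ => x) ∘ (Real.sqrt ·) ∘ hA.1.eigenvalues) *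
      ((star U : Matrix (Fin r) (Fin r) ℝ) * (U : Matrix (Fin r) (Fin r) ℝ)) *
      diagonal ((fun x : ℝ => x) ∘ (Real.sqrt ·) ∘ hA.1.eigenvalues)) * (star U : Matrix (Fin r) (Fin r) ℝ) := by
        simp only [Matrix.mul_assoc]; rfl
    _ = _ := by rw [hU, Matrix.mul_one, hD]

lemma psdSqrt_posSemidef {r : ℕ} {M : Matrix (Fin r) (Fin r) ℝ} (hA : M.PosSemidef) :
    (psdSqrt hA).PosSemidef := by
  have h0 : (0 : Fin r → ℝ) ≤ (fun x : ℝ => x) ∘ (Real.sqrt ·) ∘ hA.1.eigenvalues := fun i => by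
    simp [Real.sqrt_nonneg]
  have := (PosSemidef.diagonal h0).mul_mul_conjTranspose_same
    (hA.1.eigenvectorUnitary : Matrix (Fin r) (Fin r) ℝ)
  unfold psdSqrt
  rwa [star_eq_conjTranspose]

/-- A matrix of full column rank is injective on vectors. -/
lemma mulVec_injective_of_rank_aux {n r : ℕ} (A : Matrix (Fin n) (Fin r) ℝ)
    (h : A.rank = r) : ∀ x, A *ᵥ x = 0 → x = 0 := by
  intro x hx
  have h1 := LinearMap.finrank_range_add_finrank_ker A.mulVecLin
  rw [Matrix.rank] at h
  have h2 : Module.finrank ℝ (Fin r → ℝ) = r := by simp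
  have h3 : Module.finrank ℝ (LinearMap.ker A.mulVecLin) = 0 := by omega
  have h4 : LinearMap.ker A.mulVecLin = ⊥ := Submodule.finrank_eq_zero.mp h3
  have : x ∈ LinearMap.ker A.mulVecLin := by simpa [Matrix.mulVecLin] using hx
  simpa [h4] using this

/-- `AᵀA` is positive definite when `A` has full column rank. -/
lemma posDef_AtA_aux {n r : ℕ} (A : Matrix (Fin n) (Fin r) ℝ) (h : A.rank = r) :
    (Aᵀ * A).PosDef := by
  refine posDef_iff_dotProduct_mulVec.mpr ⟨(psd_AtA A).1, fun x hx => ?_⟩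
  have hAx : A *ᵥ x ≠ 0 := fun h0 => hx (mulVec_injective_of_rank_aux A h x h0)
  have heq : star x ⬝ᵥ (Aᵀ * A) *ᵥ x = (A *ᵥ x) ⬝ᵥ (A *ᵥ x) := by
    rw [star_trivial, ← Matrix.mulVec_mulVec, Matrix.dotProduct_mulVec, Matrix.vecMul_transpose]
  rw [heq]
  have hne : (A *ᵥ x) ⬝ᵥ (A *ᵥ x) ≠ 0 := fun h0 => hAx (dotProduct_self_eq_zero.mp h0)
  have hnn : 0 ≤ (A *ᵥ x) ⬝ᵥ (A *ᵥ x) := Finset.sum_nonneg fun i _ => mul_self_nonneg _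
  exact lt_of_le_of_ne hnn (Ne.symm hne)

/-- the key trace inequality (a special case of von Neumann's trace inequality):
for `Y, X` with orthonormal columns and `R` symmetric PSD, `tr(Yᵀ X R) ≤ tr R`. -/
lemma trace_key_aux {n r : ℕ} (Y X : Matrix (Fin n) (Fin r) ℝ)
    (hY : Yᵀ * Y = 1) (hX : Xᵀ * X = 1)
    (R : Matrix (Fin r) (Fin r) ℝ) (hR : R.PosSemidef) :
    trace (Yᵀ * (X * R)) ≤ trace R := by
  set Q := psdSqrt hR with hQdef
  have hQQ : Q * Q = R := psdSqrt_mul_self hR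
  have hQsym : Qᵀ = Q := by
    have := (psdSqrt_posSemidef hR).1
    rwa [Matrix.IsHermitian, conjTranspose_eq_transpose_of_trivial] at this
  set B1 := Y * Q with hB1
  set B2 := X * Q with hB2
  have hB1n : B1ᵀ * B1 = R := by
    rw [hB1, transpose_mul, hQsym, Matrix.mul_assoc, ← Matrix.mul_assoc Yᵀ, hY,
      Matrix.one_mul, hQQ]
  have hB2n : B2ᵀ * B2 = R := by
    rw [hB2, transpose_mul, hQsym, Matrix.mul_assoc, ← Matrix.mul_assoc Xᵀ, hX,
      Matrix.one_mul, hQQ]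
  have htr : trace (Yᵀ * (X * R)) = trace (B1ᵀ * B2) := by
    rw [hB1, hB2, transpose_mul, hQsym, ← hQQ]
    rw [show Yᵀ * (X * (Q * Q)) = (Yᵀ * (X * Q)) * Q by
      simp only [Matrix.mul_assoc]]
    rw [Matrix.trace_mul_comm]
    rw [Matrix.mul_assoc]
  rw [htr]
  have hdiag : ∀ j, (B1ᵀ * B2) j j ≤ R j j := by
    intro j
    have hcs := Finset.sum_mul_sq_le_sq_mul_sq Finset.univ (fun i => B1 i j) (fun i => B2 i j)
    have e1 : ∑ i, B1 i j ^ 2 = R j j := by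
      rw [← hB1n]; simp [Matrix.mul_apply, Matrix.transpose_apply, sq]
    have e2 : ∑ i, B2 i j ^ 2 = R j j := by
      rw [← hB2n]; simp [Matrix.mul_apply, Matrix.transpose_apply, sq]
    have hRjj : 0 ≤ R j j := by rw [← e1]; positivity
    have hval : (B1ᵀ * B2) j j = ∑ i, B1 i j * B2 i j := by
      simp [Matrix.mul_apply, Matrix.transpose_apply]
    rw [hval]
    rw [e1, e2] at hcs
    nlinarith [hcs, hRjj]
  simp only [Matrix.trace, Matrix.diag]
  exact Finset.sum_le_sum fun j _ => hdiag j

lemma trace_eq_sum_aux {n r : ℕ} (A B : Matrix (Fin n) (Fin r) ℝ) :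
    trace (Aᵀ * B) = ∑ i, ∑ j, A i j * B i j := by
  simp only [Matrix.trace, Matrix.diag, Matrix.mul_apply, Matrix.transpose_apply]
  exact Finset.sum_comm

/-- expansion of the squared Frobenius distance on the Stiefel manifold. -/
lemma frob_sq_expand_aux {n r : ℕ} (Z W : Matrix (Fin n) (Fin r) ℝ)
    (hZ : Zᵀ * Z = 1) (hW : Wᵀ * W = 1) :
    frob (Z - W) ^ 2 = 2 * r - 2 * trace (Zᵀ * W) := by
  have h0 : frob (Z - W) ^ 2 = ∑ i, ∑ j, (Z i j - W i j) ^ 2 := by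
    rw [frob, Real.sq_sqrt (Finset.sum_nonneg fun i _ =>
      Finset.sum_nonneg fun j _ => sq_nonneg ((Z - W) i j))]
    simp [Matrix.sub_apply]
  have hZn : ∑ i, ∑ j, Z i j * Z i j = (r : ℝ) := by
    rw [← trace_eq_sum_aux, hZ]; simp [Matrix.trace]
  have hWn : ∑ i, ∑ j, W i j * W i j = (r : ℝ) := by
    rw [← trace_eq_sum_aux, hW]; simp [Matrix.trace]
  rw [h0, trace_eq_sum_aux]
  have : ∀ i j, (Z i j - W i j) ^ 2 =
      Z i j * Z i j - 2 * (Z i j * W i j) + W i j * W i j := by intro i j; ring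
  simp only [this, Finset.sum_add_distrib, Finset.sum_sub_distrib, ← Finset.mul_sum]
  rw [hZn, hWn]; ring

/-- the induced arithmetic mean is the orthogonal projection of the Euclidean
average onto the Stiefel manifold: if `X̄ = (1/N)Σ X_i` has full column rank, then its polar
factor `X̂ = X̄(X̄ᵀX̄)^{-1/2}` lies in `St(n,r)` and minimizes `Σ_i ‖Y − X_i‖_F²` over
`Y ∈ St(n,r)`. -/
theorem polarFactor_isIAM {n r N : ℕ}
    (Xs : Fin N → Matrix (Fin n) (Fin r) ℝ)
    (hXs : ∀ i, Xs i ∈ Stiefel n r)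
    (Xbar : Matrix (Fin n) (Fin r) ℝ)
    (hXbar : Xbar = (N : ℝ)⁻¹ • ∑ i, Xs i)
    (hrank : Xbar.rank = r) :
    polarFactor Xbar ∈ Stiefel n r ∧
      ∀ Y ∈ Stiefel n r,
        ∑ i, frob (polarFactor Xbar - Xs i) ^ 2 ≤ ∑ i, frob (Y - Xs i) ^ 2 := by
  have hpd : (Xbarᵀ * Xbar).PosDef := posDef_AtA_aux Xbar hrank
  set R := psdSqrt (psd_AtA Xbar) with hRdef
  have hRR : R * R = Xbarᵀ * Xbar := psdSqrt_mul_self (psd_AtA Xbar)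
  have hRsym : Rᵀ = R := by
    have := (psdSqrt_posSemidef (psd_AtA Xbar)).1
    rwa [Matrix.IsHermitian, conjTranspose_eq_transpose_of_trivial] at this
  have hdet : IsUnit R.det := by
    have h1 : R.det * R.det = (Xbarᵀ * Xbar).det := by rw [← det_mul, hRR]
    have h2 : (0:ℝ) < (Xbarᵀ * Xbar).det := hpd.det_pos
    have : R.det ≠ 0 := by intro h; rw [h, mul_zero] at h1; linarith
    exact isUnit_iff_ne_zero.mpr this
  have hinv1 : R⁻¹ * R = 1 := nonsing_inv_mul R hdet
  have hinv2 : R * R⁻¹ = 1 := mul_nonsing_inv R hdet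
  have hinvT : (R⁻¹)ᵀ = R⁻¹ := by rw [transpose_nonsing_inv, hRsym]
  set Xhat := polarFactor Xbar with hXhat
  have hXhatdef : Xhat = Xbar * R⁻¹ := rfl
  have hmem : Xhatᵀ * Xhat = 1 := by
    calc Xhatᵀ * Xhat = R⁻¹ * ((Xbarᵀ * Xbar) * R⁻¹) := by
          rw [hXhatdef, transpose_mul, hinvT]
          rw [Matrix.mul_assoc, Matrix.mul_assoc]
        _ = R⁻¹ * ((R * R) * R⁻¹) := by rw [hRR]
        _ = 1 := by rw [Matrix.mul_assoc, hinv2, Matrix.mul_one, hinv1]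
  refine ⟨hmem, fun Y hY => ?_⟩
  -- trace characterization
  have hXhatR : Xhat * R = Xbar := by
    rw [hXhatdef, Matrix.mul_assoc, hinv1, Matrix.mul_one]
  have htr_hat : trace (Xhatᵀ * Xbar) = trace R := by
    calc trace (Xhatᵀ * Xbar) = trace (R⁻¹ * (Xbarᵀ * Xbar)) := by
          rw [hXhatdef, transpose_mul, hinvT, Matrix.mul_assoc]
        _ = trace (R⁻¹ * (R * R)) := by rw [hRR]
        _ = trace R := by rw [← Matrix.mul_assoc, hinv1, Matrix.one_mul]
  have htr_le : trace (Yᵀ * Xbar) ≤ trace (Xhatᵀ * Xbar) := by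
    rw [htr_hat, ← hXhatR]
    exact trace_key_aux Y Xhat hY hmem R (psdSqrt_posSemidef (psd_AtA Xbar))
  -- expand both sums
  have hexpand : ∀ Z : Matrix (Fin n) (Fin r) ℝ, Zᵀ * Z = 1 →
      ∑ i, frob (Z - Xs i) ^ 2 = 2 * N * r - 2 * trace (Zᵀ * ∑ i, Xs i) := by
    intro Z hZ
    have : ∀ i : Fin N, frob (Z - Xs i) ^ 2 = 2 * r - 2 * trace (Zᵀ * Xs i) :=
      fun i => frob_sq_expand_aux Z (Xs i) hZ (hXs i)
    simp only [this, Finset.sum_sub_distrib, Finset.sum_const, Finset.card_univ,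
      Fintype.card_fin, nsmul_eq_mul, ← Finset.mul_sum, Matrix.mul_sum, Matrix.trace_sum]
    ring
  rw [hexpand _ hmem, hexpand _ hY]
  have hfinal : trace (Yᵀ * ∑ i, Xs i) ≤ trace (Xhatᵀ * ∑ i, Xs i) := by
    rcases Nat.eq_zero_or_pos N with hN | hN
    · subst hN; simp
    · have hNne : (N : ℝ) ≠ 0 := Nat.cast_ne_zero.mpr hN.ne'
      have hsum : (∑ i, Xs i) = (N : ℝ) • Xbar := by
        rw [hXbar, smul_smul, mul_inv_cancel₀ hNne, one_smul]
      rw [hsum, Matrix.mul_smul, Matrix.trace_smul, Matrix.mul_smul, Matrix.trace_smul]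
      exact smul_le_smul_of_nonneg_left htr_le (Nat.cast_nonneg N)
  linarith
end
end
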